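/- In (Z/2)[x,y,z], let I_A be the ideal generated by (x^3*y + y*z^3, x^2*y + y^3 + y*z^2, y^2*z + z^3, x*z, x^4). Then among the seven nonzero linear forms in x,y,z, exactly x and z have codimension 1 (i.e. annihilate some nonzero linear form modulo I_A), and the codimension of x+z is 3, i.e. (x+z)*δ ∉ I_A for every nonzero homogeneous δ of degree ≤ 2, while some degree-3 homogeneous δ satisfies (x+z)*δ ∈ I_A. -/

import Mathlib

set_option maxRecDepth 4000
open MvPolynomial Finsupp
abbrev P := MvPolynomial (Fin 3) (ZMod 2)
noncomputable def mm (a b c : ℕ) : Fin 3 →₀ ℕ :=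
  Finsupp.single 0 a + Finsupp.single 1 b + Finsupp.single 2 c

lemma mm_apply0 (a b c : ℕ) : mm a b c 0 = a := by simp [mm, Finsupp.single_apply]
lemma mm_apply1 (a b c : ℕ) : mm a b c 1 = b := by simp [mm, Finsupp.single_apply]
lemma mm_apply2 (a b c : ℕ) : mm a b c 2 = c := by simp [mm, Finsupp.single_apply]

lemma mm_le {a b c d e f : ℕ} : mm a b c ≤ mm d e f ↔ a ≤ d ∧ b ≤ e ∧ c ≤ f := by
  rw [Finsupp.le_def]
  constructor
  · intro h
    exact ⟨by simpa [mm_apply0] using h 0, by simpa [mm_apply1] using h 1,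
      by simpa [mm_apply2] using h 2⟩
  · rintro ⟨h1, h2, h3⟩ i
    fin_cases i <;> simpa [mm_apply0, mm_apply1, mm_apply2]

lemma mm_eq {a b c d e f : ℕ} : mm a b c = mm d e f ↔ a = d ∧ b = e ∧ c = f := by
  constructor
  · intro h
    refine ⟨?_, ?_, ?_⟩
    · rw [← mm_apply0 a b c, h, mm_apply0]
    · rw [← mm_apply1 a b c, h, mm_apply1]
    · rw [← mm_apply2 a b c, h, mm_apply2]
  · rintro ⟨rfl, rfl, rfl⟩; rfl

lemma mm_sub {a b c d e f : ℕ} : mm d e f - mm a b c = mm (d-a) (e-b) (f-c) := by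
  ext i; fin_cases i <;>
    simp [Finsupp.tsub_apply, mm_apply0, mm_apply1, mm_apply2]

lemma mm_add {a b c d e f : ℕ} : mm a b c + mm d e f = mm (a+d) (b+e) (c+f) := by
  ext i; fin_cases i <;>
    simp [Finsupp.add_apply, mm_apply0, mm_apply1, mm_apply2]

lemma mm_smul (n a b c : ℕ) : n • mm a b c = mm (n*a) (n*b) (n*c) := by
  ext i; fin_cases i <;>
    simp [Finsupp.smul_apply, mm_apply0, mm_apply1, mm_apply2]

lemma X0_eq : (X 0 : P) = monomial (mm 1 0 0) 1 := by
  rw [show mm 1 0 0 = Finsupp.single 0 1 by simp [mm]]; rfl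
lemma X1_eq : (X 1 : P) = monomial (mm 0 1 0) 1 := by
  rw [show mm 0 1 0 = Finsupp.single 1 1 by simp [mm]]; rfl
lemma X2_eq : (X 2 : P) = monomial (mm 0 0 1) 1 := by
  rw [show mm 0 0 1 = Finsupp.single 2 1 by simp [mm]]; rfl

lemma g1_eq : (X 0 ^ 3 * X 1 + X 1 * X 2 ^ 3 : P)
    = monomial (mm 3 1 0) 1 + monomial (mm 0 1 3) 1 := by
  simp only [X0_eq, X1_eq, X2_eq, monomial_pow, monomial_mul, mm_smul, mm_add]
  norm_num
lemma g2_eq : (X 0 ^ 2 * X 1 + X 1 ^ 3 + X 1 * X 2 ^ 2 : P)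
    = monomial (mm 2 1 0) 1 + monomial (mm 0 3 0) 1 + monomial (mm 0 1 2) 1 := by
  simp only [X0_eq, X1_eq, X2_eq, monomial_pow, monomial_mul, mm_smul, mm_add]
  norm_num
lemma g3_eq : (X 1 ^ 2 * X 2 + X 2 ^ 3 : P)
    = monomial (mm 0 2 1) 1 + monomial (mm 0 0 3) 1 := by
  simp only [X0_eq, X1_eq, X2_eq, monomial_pow, monomial_mul, mm_smul, mm_add]
  norm_num
lemma g4_eq : (X 0 * X 2 : P) = monomial (mm 1 0 1) 1 := by
  simp only [X0_eq, X2_eq, monomial_mul, mm_add]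
  norm_num
lemma g5_eq : (X 0 ^ 4 : P) = monomial (mm 4 0 0) 1 := by
  simp only [X0_eq, monomial_pow, mm_smul, mm_add]
  norm_num

noncomputable def G1 : P := X 0 ^ 3 * X 1 + X 1 * X 2 ^ 3
noncomputable def G2 : P := X 0 ^ 2 * X 1 + X 1 ^ 3 + X 1 * X 2 ^ 2
noncomputable def G3 : P := X 1 ^ 2 * X 2 + X 2 ^ 3
noncomputable def G4 : P := X 0 * X 2
noncomputable def G5 : P := X 0 ^ 4

lemma rep {q : P} (hq : q ∈ Ideal.span {G1, G2, G3, G4, G5}) :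
    ∃ p1 p2 p3 p4 p5 : P, q = p1 * G1 + p2 * G2 + p3 * G3 + p4 * G4 + p5 * G5 := by
  rw [Ideal.span, Submodule.mem_span_insert] at hq
  obtain ⟨p1, q1, hq1, rfl⟩ := hq
  rw [Submodule.mem_span_insert] at hq1
  obtain ⟨p2, q2, hq2, rfl⟩ := hq1
  rw [Submodule.mem_span_insert] at hq2
  obtain ⟨p3, q3, hq3, rfl⟩ := hq2
  rw [Submodule.mem_span_insert] at hq3
  obtain ⟨p4, q4, hq4, rfl⟩ := hq3
  rw [Submodule.mem_span_singleton] at hq4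
  obtain ⟨p5, rfl⟩ := hq4
  exact ⟨p1, p2, p3, p4, p5, by simp [smul_eq_mul]; ring⟩

lemma van (M : Fin 3 →₀ ℕ) {q : P} (hq : q ∈ Ideal.span {G1, G2, G3, G4, G5})
    (h1 : ¬ mm 3 1 0 ≤ M) (h1' : ¬ mm 0 1 3 ≤ M)
    (h2 : ¬ mm 2 1 0 ≤ M) (h2' : ¬ mm 0 3 0 ≤ M) (h2'' : ¬ mm 0 1 2 ≤ M)
    (h3 : ¬ mm 0 2 1 ≤ M) (h3' : ¬ mm 0 0 3 ≤ M)
    (h4 : ¬ mm 1 0 1 ≤ M) (h5 : ¬ mm 4 0 0 ≤ M) :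
    coeff M q = 0 := by
  obtain ⟨p1, p2, p3, p4, p5, rfl⟩ := rep hq
  simp [G1, G2, G3, G4, G5, g1_eq, g2_eq, g3_eq, g4_eq, g5_eq, coeff_add, mul_add,
    coeff_mul_monomial', h1, h1', h2, h2', h2'', h3, h3', h4, h5]

lemma van' (M : Fin 3 →₀ ℕ) {q : P} (hq : q ∈ Ideal.span {G1, G2, G3, G4, G5})
    (h1 : ¬ mm 3 1 0 ≤ M) (h1' : ¬ mm 0 1 3 ≤ M)
    (h2 : ¬ mm 2 1 0 ≤ M) (h2' : ¬ mm 0 3 0 ≤ M) (h2'' : ¬ mm 0 1 2 ≤ M)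
    (h3 : ¬ mm 0 2 1 ≤ M) (h3' : ¬ mm 0 0 3 ≤ M)
    (h4 : ¬ mm 1 0 1 ≤ M) (h5 : ¬ mm 4 0 0 ≤ M) :
    coeff M q = 0 := van M hq h1 h1' h2 h2' h2'' h3 h3' h4 h5

lemma van200 {q : P} (hq : q ∈ Ideal.span {G1, G2, G3, G4, G5}) : coeff (mm 2 0 0) q = 0 :=
  van _ hq (by simp [mm_le]) (by simp [mm_le]) (by simp [mm_le]) (by simp [mm_le])
    (by simp [mm_le]) (by simp [mm_le]) (by simp [mm_le]) (by simp [mm_le]) (by simp [mm_le])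
lemma van110 {q : P} (hq : q ∈ Ideal.span {G1, G2, G3, G4, G5}) : coeff (mm 1 1 0) q = 0 :=
  van _ hq (by simp [mm_le]) (by simp [mm_le]) (by simp [mm_le]) (by simp [mm_le])
    (by simp [mm_le]) (by simp [mm_le]) (by simp [mm_le]) (by simp [mm_le]) (by simp [mm_le])
lemma van020 {q : P} (hq : q ∈ Ideal.span {G1, G2, G3, G4, G5}) : coeff (mm 0 2 0) q = 0 :=
  van _ hq (by simp [mm_le]) (by simp [mm_le]) (by simp [mm_le]) (by simp [mm_le])
    (by simp [mm_le]) (by simp [mm_le]) (by simp [mm_le]) (by simp [mm_le]) (by simp [mm_le])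
lemma van011 {q : P} (hq : q ∈ Ideal.span {G1, G2, G3, G4, G5}) : coeff (mm 0 1 1) q = 0 :=
  van _ hq (by simp [mm_le]) (by simp [mm_le]) (by simp [mm_le]) (by simp [mm_le])
    (by simp [mm_le]) (by simp [mm_le]) (by simp [mm_le]) (by simp [mm_le]) (by simp [mm_le])
lemma van002 {q : P} (hq : q ∈ Ideal.span {G1, G2, G3, G4, G5}) : coeff (mm 0 0 2) q = 0 :=
  van _ hq (by simp [mm_le]) (by simp [mm_le]) (by simp [mm_le]) (by simp [mm_le])
    (by simp [mm_le]) (by simp [mm_le]) (by simp [mm_le]) (by simp [mm_le]) (by simp [mm_le])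
lemma van300 {q : P} (hq : q ∈ Ideal.span {G1, G2, G3, G4, G5}) : coeff (mm 3 0 0) q = 0 :=
  van _ hq (by simp [mm_le]) (by simp [mm_le]) (by simp [mm_le]) (by simp [mm_le])
    (by simp [mm_le]) (by simp [mm_le]) (by simp [mm_le]) (by simp [mm_le]) (by simp [mm_le])
lemma van120 {q : P} (hq : q ∈ Ideal.span {G1, G2, G3, G4, G5}) : coeff (mm 1 2 0) q = 0 :=
  van _ hq (by simp [mm_le]) (by simp [mm_le]) (by simp [mm_le]) (by simp [mm_le])
    (by simp [mm_le]) (by simp [mm_le]) (by simp [mm_le]) (by simp [mm_le]) (by simp [mm_le])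

lemma vanp1 {q : P} (hq : q ∈ Ideal.span {G1, G2, G3, G4, G5}) :
    coeff (mm 2 1 0) q + coeff (mm 0 3 0) q = 0 := by
  obtain ⟨p1, p2, p3, p4, p5, rfl⟩ := rep hq
  simp [G1, G2, G3, G4, G5, g1_eq, g2_eq, g3_eq, g4_eq, g5_eq, coeff_add, mul_add,
    coeff_mul_monomial', mm_le, mm_sub, CharTwo.add_self_eq_zero]

lemma vanp2 {q : P} (hq : q ∈ Ideal.span {G1, G2, G3, G4, G5}) :
    coeff (mm 2 1 0) q + coeff (mm 0 1 2) q = 0 := by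
  obtain ⟨p1, p2, p3, p4, p5, rfl⟩ := rep hq
  simp [G1, G2, G3, G4, G5, g1_eq, g2_eq, g3_eq, g4_eq, g5_eq, coeff_add, mul_add,
    coeff_mul_monomial', mm_le, mm_sub, CharTwo.add_self_eq_zero]

lemma vanp3 {q : P} (hq : q ∈ Ideal.span {G1, G2, G3, G4, G5}) :
    coeff (mm 0 2 1) q + coeff (mm 0 0 3) q = 0 := by
  obtain ⟨p1, p2, p3, p4, p5, rfl⟩ := rep hq
  simp [G1, G2, G3, G4, G5, g1_eq, g2_eq, g3_eq, g4_eq, g5_eq, coeff_add, mul_add,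
    coeff_mul_monomial', mm_le, mm_sub, CharTwo.add_self_eq_zero]

lemma finsupp_decomp (d : Fin 3 →₀ ℕ) : d = mm (d 0) (d 1) (d 2) := by
  ext i; fin_cases i <;> simp [mm_apply0, mm_apply1, mm_apply2]

lemma degree_eq (d : Fin 3 →₀ ℕ) : d.degree = d 0 + d 1 + d 2 := by
  rw [Finsupp.degree_apply, Finset.sum_subset (Finset.subset_univ _)
    (by intro i _ hi; simpa using hi), Fin.sum_univ_three]

lemma hom1_classify {δ : P} (hδ : δ.IsHomogeneous 1)
    (h1 : coeff (mm 1 0 0) δ = 0) (h2 : coeff (mm 0 1 0) δ = 0)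
    (h3 : coeff (mm 0 0 1) δ = 0) : δ = 0 := by
  ext d
  rw [coeff_zero]
  by_cases hd : d.degree = 1
  · rw [degree_eq] at hd
    have hdd := finsupp_decomp d
    have : (d 0 = 1 ∧ d 1 = 0 ∧ d 2 = 0) ∨ (d 0 = 0 ∧ d 1 = 1 ∧ d 2 = 0) ∨
        (d 0 = 0 ∧ d 1 = 0 ∧ d 2 = 1) := by omega
    rcases this with ⟨a, b, c⟩ | ⟨a, b, c⟩ | ⟨a, b, c⟩ <;>
      rw [hdd, a, b, c] <;> assumption
  · exact hδ.coeff_eq_zero hd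

lemma hom2_classify {δ : P} (hδ : δ.IsHomogeneous 2)
    (h1 : coeff (mm 2 0 0) δ = 0) (h2 : coeff (mm 1 1 0) δ = 0)
    (h3 : coeff (mm 0 2 0) δ = 0) (h4 : coeff (mm 0 1 1) δ = 0)
    (h5 : coeff (mm 0 0 2) δ = 0) :
    δ = C (coeff (mm 1 0 1) δ) * (X 0 * X 2) := by
  ext d
  rw [g4_eq, coeff_C_mul, coeff_monomial]
  by_cases hd : d.degree = 2
  · rw [degree_eq] at hd
    have hdd := finsupp_decomp d
    have : (d 0 = 2 ∧ d 1 = 0 ∧ d 2 = 0) ∨ (d 0 = 1 ∧ d 1 = 1 ∧ d 2 = 0) ∨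
        (d 0 = 1 ∧ d 1 = 0 ∧ d 2 = 1) ∨ (d 0 = 0 ∧ d 1 = 2 ∧ d 2 = 0) ∨
        (d 0 = 0 ∧ d 1 = 1 ∧ d 2 = 1) ∨ (d 0 = 0 ∧ d 1 = 0 ∧ d 2 = 2) := by omega
    rcases this with ⟨a, b, c⟩ | ⟨a, b, c⟩ | ⟨a, b, c⟩ | ⟨a, b, c⟩ | ⟨a, b, c⟩ | ⟨a, b, c⟩ <;>
      rw [hdd, a, b, c] <;> simp [mm_eq, h1, h2, h3, h4, h5]
  · rw [hδ.coeff_eq_zero hd, if_neg, mul_zero]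
    intro h
    rw [← h, degree_eq, mm_apply0, mm_apply1, mm_apply2] at hd
    omega

lemma exX : ∃ c : Fin 3 → ZMod 2, c ≠ 0 ∧
    (X 0 : P) * (∑ i, C (c i) * X i) ∈ Ideal.span {G1, G2, G3, G4, G5} := by
  refine ⟨fun i => if i = 2 then 1 else 0, ?_, ?_⟩
  · intro h; have := congrFun h 2; simp at this
  · have hs : (∑ i : Fin 3, C (if i = 2 then (1 : ZMod 2) else 0) * X i) = X 2 := by
      rw [Fin.sum_univ_three]; simp
    rw [hs]
    exact Ideal.subset_span (by simp [G4])

lemma exZ : ∃ c : Fin 3 → ZMod 2, c ≠ 0 ∧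
    (X 2 : P) * (∑ i, C (c i) * X i) ∈ Ideal.span {G1, G2, G3, G4, G5} := by
  refine ⟨fun i => if i = 0 then 1 else 0, ?_, ?_⟩
  · intro h; have := congrFun h 0; simp at this
  · have hs : (∑ i : Fin 3, C (if i = 0 then (1 : ZMod 2) else 0) * X i) = X 0 := by
      rw [Fin.sum_univ_three]; simp
    rw [hs, mul_comm]
    exact Ideal.subset_span (by simp [G4])

theorem stmt_19 (I : Ideal (MvPolynomial (Fin 3) (ZMod 2)))
    (hI : I = Ideal.span {X 0 ^ 3 * X 1 + X 1 * X 2 ^ 3,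
      X 0 ^ 2 * X 1 + X 1 ^ 3 + X 1 * X 2 ^ 2, X 1 ^ 2 * X 2 + X 2 ^ 3,
      X 0 * X 2, X 0 ^ 4})
    (x y z : MvPolynomial (Fin 3) (ZMod 2)) (hx : x = X 0) (hy : y = X 1) (hz : z = X 2) :
    (∀ γ ∈ ({x, y, z, x + y, x + z, y + z, x + y + z} :
        Set (MvPolynomial (Fin 3) (ZMod 2))),
      ((∃ c : Fin 3 → ZMod 2, c ≠ 0 ∧ γ * (∑ i, C (c i) * X i) ∈ I) ↔ (γ = x ∨ γ = z))) ∧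
    (∀ δ : MvPolynomial (Fin 3) (ZMod 2), δ ∉ I →
      (δ.IsHomogeneous 1 ∨ δ.IsHomogeneous 2) → (x + z) * δ ∉ I) ∧
    (∃ δ : MvPolynomial (Fin 3) (ZMod 2), δ ∉ I ∧ δ.IsHomogeneous 3 ∧ (x + z) * δ ∈ I) := by
  subst hI hx hy hz
  have hspan : Ideal.span {X 0 ^ 3 * X 1 + X 1 * X 2 ^ 3,
      X 0 ^ 2 * X 1 + X 1 ^ 3 + X 1 * X 2 ^ 2, X 1 ^ 2 * X 2 + X 2 ^ 3,
      X 0 * X 2, X 0 ^ 4} = Ideal.span {G1, G2, G3, G4, G5} := rfl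
  rw [hspan]
  refine ⟨?_, ?_, ?_⟩
  · intro γ hγ
    simp only [Set.mem_insert_iff, Set.mem_singleton_iff] at hγ
    rcases hγ with rfl | rfl | rfl | rfl | rfl | rfl | rfl
    · exact ⟨fun _ => Or.inl rfl, fun _ => exX⟩
    · constructor
      · rintro ⟨c, hc, hmem⟩
        exfalso; apply hc
        have h1 := van110 hmem
        have h2 := van020 hmem
        have h3 := van011 hmem
        simp only [Fin.sum_univ_three, mul_add, add_mul, C_apply, X0_eq, X1_eq, X2_eq,
          monomial_mul, zero_add, add_zero, one_mul, mul_one, mm_add, coeff_add,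
          coeff_monomial, mm_eq] at h1 h2 h3
        norm_num at h1 h2 h3
        funext i; fin_cases i <;> simp only [Pi.zero_apply] <;> assumption
      · rintro (h | h) <;> rw [h]
        · exact exX
        · exact exZ
    · exact ⟨fun _ => Or.inr rfl, fun _ => exZ⟩
    · constructor
      · rintro ⟨c, hc, hmem⟩
        exfalso; apply hc
        have h1 := van200 hmem
        have h2 := van020 hmem
        have h3 := van011 hmem
        simp only [Fin.sum_univ_three, mul_add, add_mul, C_apply, X0_eq, X1_eq, X2_eq,
          monomial_mul, zero_add, add_zero, one_mul, mul_one, mm_add, coeff_add,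
          coeff_monomial, mm_eq] at h1 h2 h3
        norm_num at h1 h2 h3
        funext i; fin_cases i <;> simp only [Pi.zero_apply] <;> assumption
      · rintro (h | h) <;> rw [h]
        · exact exX
        · exact exZ
    · constructor
      · rintro ⟨c, hc, hmem⟩
        exfalso; apply hc
        have h1 := van200 hmem
        have h2 := van110 hmem
        have h3 := van002 hmem
        simp only [Fin.sum_univ_three, mul_add, add_mul, C_apply, X0_eq, X1_eq, X2_eq,
          monomial_mul, zero_add, add_zero, one_mul, mul_one, mm_add, coeff_add,
          coeff_monomial, mm_eq] at h1 h2 h3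
        norm_num at h1 h2 h3
        funext i; fin_cases i <;> simp only [Pi.zero_apply] <;> assumption
      · rintro (h | h) <;> rw [h]
        · exact exX
        · exact exZ
    · constructor
      · rintro ⟨c, hc, hmem⟩
        exfalso; apply hc
        have h1 := van110 hmem
        have h2 := van020 hmem
        have h3 := van002 hmem
        simp only [Fin.sum_univ_three, mul_add, add_mul, C_apply, X0_eq, X1_eq, X2_eq,
          monomial_mul, zero_add, add_zero, one_mul, mul_one, mm_add, coeff_add,
          coeff_monomial, mm_eq] at h1 h2 h3
        norm_num at h1 h2 h3
        funext i; fin_cases i <;> simp only [Pi.zero_apply] <;> assumption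
      · rintro (h | h) <;> rw [h]
        · exact exX
        · exact exZ
    · constructor
      · rintro ⟨c, hc, hmem⟩
        exfalso; apply hc
        have h1 := van200 hmem
        have h2 := van020 hmem
        have h3 := van002 hmem
        simp only [Fin.sum_univ_three, mul_add, add_mul, C_apply, X0_eq, X1_eq, X2_eq,
          monomial_mul, zero_add, add_zero, one_mul, mul_one, mm_add, coeff_add,
          coeff_monomial, mm_eq] at h1 h2 h3
        norm_num at h1 h2 h3
        funext i; fin_cases i <;> simp only [Pi.zero_apply] <;> assumption
      · rintro (h | h) <;> rw [h]
        · exact exX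
        · exact exZ
  · intro δ hδI hhom hmem
    rcases hhom with h1 | h2
    · have a1 := van200 hmem
      have a2 := van110 hmem
      have a3 := van002 hmem
      simp only [add_mul, X0_eq, X2_eq, coeff_add, coeff_monomial_mul', mm_le, mm_sub,
        one_mul] at a1 a2 a3
      norm_num at a1 a2 a3
      exact hδI (hom1_classify h1 a1 a2 a3 ▸ Ideal.zero_mem _)
    · have a1 := van300 hmem
      have a2 := van120 hmem
      have b1 := vanp1 hmem
      have b2 := vanp2 hmem
      have b3 := vanp3 hmem
      simp only [add_mul, X0_eq, X2_eq, coeff_add, coeff_monomial_mul', mm_le, mm_sub,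
        one_mul] at a1 a2 b1 b2 b3
      norm_num at a1 a2 b1 b2 b3
      rw [b1, zero_add] at b2
      rw [a2, zero_add] at b3
      have hcl := hom2_classify h2 a1 b1 a2 b2 b3
      refine hδI ?_
      rw [hcl]
      exact Ideal.mul_mem_left _ _ (Ideal.subset_span (by simp [G4]))
  · refine ⟨X 0 ^ 3, ?_, isHomogeneous_X_pow 0 3, ?_⟩
    · intro h
      have := van300 h
      simp only [X0_eq, monomial_pow, mm_smul, coeff_monomial, mm_eq] at this
      norm_num at this
    · have heq : (X 0 + X 2) * X 0 ^ 3 = 1 * G5 + X 0 ^ 2 * G4 := by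
        unfold G4 G5; ring
      rw [heq]
      exact Ideal.add_mem _ (Ideal.mul_mem_left _ _ (Ideal.subset_span (by simp [G5])))
        (Ideal.mul_mem_left _ _ (Ideal.subset_span (by simp [G4])))
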